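/- Let d be an odd positive integer and λ a nonzero complex number. If f : ℤ/dℤ → ℂ satisfies (f ∗ f)(2k) = λ f(k)² for all k ∈ ℤ/dℤ, then its Fourier transform f̂ satisfies (f̂ ∗ f̂)(2k) = (d/λ) f̂(k)² for all k ∈ ℤ/dℤ; that is, the Fourier transform maps F_λ into F_{d/λ}. -/

import Mathlib

open Finset

/-- Convolution of two functions on `ℤ/dℤ`. -/
noncomputable def conv {d : ℕ} [NeZero d] (f g : ZMod d → ℂ) (k : ZMod d) : ℂ :=
  ∑ l : ZMod d, f l * g (k - l)

/-- Fourier transform of a function on `ℤ/dℤ`. -/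
noncomputable def dft {d : ℕ} [NeZero d] (f : ZMod d → ℂ) (k : ZMod d) : ℂ :=
  (1 / (Real.sqrt d : ℂ)) * ∑ l : ZMod d,
    Complex.exp (-2 * (Real.pi : ℂ) * Complex.I * (k.val : ℂ) * (l.val : ℂ) / d) * f l

noncomputable def Ee (d : ℕ) (n : ℤ) : ℂ :=
  Complex.exp (-2 * (Real.pi : ℂ) * Complex.I * (n : ℂ) / d)

lemma Ee_add (d : ℕ) (m n : ℤ) : Ee d (m + n) = Ee d m * Ee d n := by
  rw [Ee, Ee, Ee, ← Complex.exp_add]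
  congr 1
  push_cast
  ring

lemma Ee_int_mul (d : ℕ) [NeZero d] (t : ℤ) : Ee d ((d : ℤ) * t) = 1 := by
  have hd : (d : ℂ) ≠ 0 := Nat.cast_ne_zero.mpr (NeZero.ne d)
  rw [Ee]
  have h : (-2 * (Real.pi : ℂ) * Complex.I * (((d : ℤ) * t : ℤ) : ℂ) / d)
      = ((-t : ℤ) : ℂ) * (2 * Real.pi * Complex.I) := by
    push_cast
    field_simp
  rw [h, Complex.exp_int_mul_two_pi_mul_I]

lemma Ee_congr (d : ℕ) [NeZero d] {m n : ℤ} (h : (d : ℤ) ∣ m - n) : Ee d m = Ee d n := by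
  obtain ⟨t, ht⟩ := h
  have hm : m = n + (d : ℤ) * t := by linarith
  rw [hm, Ee_add, Ee_int_mul, mul_one]

lemma Ee_nat_pow (d : ℕ) (j : ℕ) (n : ℤ) : Ee d ((j : ℤ) * n) = (Ee d n) ^ j := by
  rw [Ee, Ee, ← Complex.exp_nat_mul]
  congr 1
  push_cast
  ring

noncomputable def ee {d : ℕ} [NeZero d] (x : ZMod d) : ℂ := Ee d (x.val : ℤ)

lemma ee_intCast {d : ℕ} [NeZero d] (n : ℤ) : ee ((n : ZMod d)) = Ee d n := by
  apply Ee_congr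
  rw [← ZMod.intCast_zmod_eq_zero_iff_dvd]
  push_cast
  simp

lemma ee_add {d : ℕ} [NeZero d] (x y : ZMod d) : ee (x + y) = ee x * ee y := by
  have h : ((((x.val : ℤ) + (y.val : ℤ)) : ℤ) : ZMod d) = x + y := by push_cast; simp
  rw [← h, ee_intCast, Ee_add]
  rfl

lemma ee_mul {d : ℕ} [NeZero d] (k l : ZMod d) :
    ee (k * l) = Ee d ((k.val : ℤ) * (l.val : ℤ)) := by
  have h : ((((k.val : ℤ) * (l.val : ℤ)) : ℤ) : ZMod d) = k * l := by push_cast; simp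
  rw [← h, ee_intCast]

lemma ee_zero {d : ℕ} [NeZero d] : ee (0 : ZMod d) = 1 := by
  rw [ee]
  simp [Ee]

lemma ee_sum (d : ℕ) [NeZero d] (c : ZMod d) :
    ∑ m : ZMod d, ee (m * c) = if c = 0 then (d : ℂ) else 0 := by
  have hstep : ∀ m : ZMod d, ee (m * c) = (ee c) ^ m.val := by
    intro m
    rw [ee_mul, show ee c = Ee d (c.val : ℤ) from rfl, ← Ee_nat_pow]
  rw [Finset.sum_congr rfl (fun m _ => hstep m)]
  have hre : ∑ m : ZMod d, (ee c) ^ m.val = ∑ j ∈ Finset.range d, (ee c) ^ j := by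
    refine Finset.sum_nbij' (fun m => m.val) (fun j => (j : ZMod d)) ?_ ?_ ?_ ?_ ?_
    · intro a _; exact Finset.mem_range.mpr (ZMod.val_lt a)
    · intro a _; exact Finset.mem_univ _
    · intro a _; simp [ZMod.natCast_val, ZMod.cast_id]
    · intro j hj; exact ZMod.val_cast_of_lt (Finset.mem_range.mp hj)
    · intro a _; rfl
  rw [hre]
  have hpow : (ee c) ^ d = 1 := by
    rw [ee, ← Ee_nat_pow]
    have : ((d : ℤ) * (c.val : ℤ)) = (d : ℤ) * c.val := rfl
    rw [Ee_int_mul]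
  by_cases hc : c = 0
  · subst hc
    simp [ee_zero]
  · have hz : ee c ≠ 1 := by
      intro h
      rw [ee, Ee, Complex.exp_eq_one_iff] at h
      obtain ⟨n, hn⟩ := h
      have hπ : (Real.pi : ℂ) ≠ 0 := by
        simpa using Complex.ofReal_ne_zero.mpr Real.pi_ne_zero
      have hdc : (d : ℂ) ≠ 0 := Nat.cast_ne_zero.mpr (NeZero.ne d)
      have hI : Complex.I ≠ 0 := Complex.I_ne_zero
      have h2pi : (2 * (Real.pi : ℂ) * Complex.I) ≠ 0 :=
        mul_ne_zero (mul_ne_zero two_ne_zero hπ) hI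
      have h1 : -2 * (Real.pi : ℂ) * Complex.I * ((c.val : ℤ) : ℂ)
          = (n : ℂ) * (2 * Real.pi * Complex.I) * d := by
        have := congrArg (· * (d : ℂ)) hn
        simpa [div_mul_cancel₀, hdc] using this
      have h2 : (2 * (Real.pi : ℂ) * Complex.I) * (-((c.val : ℤ) : ℂ))
          = (2 * (Real.pi : ℂ) * Complex.I) * ((n : ℂ) * d) := by
        linear_combination h1
      have h3 : -((c.val : ℤ) : ℂ) = (n : ℂ) * d := mul_left_cancel₀ h2pi h2
      have hv : (c.val : ℤ) = -n * d := by
        have : ((c.val : ℤ) : ℂ) = ((-n * d : ℤ) : ℂ) := by push_cast; linear_combination -h3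
        exact_mod_cast this
      have hdvd : (d : ℤ) ∣ (c.val : ℤ) := ⟨-n, by linarith⟩
      have hdvd' : d ∣ c.val := Int.ofNat_dvd.mp hdvd
      have hval0 : c.val ≠ 0 := fun h0 => hc (by rwa [← ZMod.val_eq_zero])
      have := Nat.le_of_dvd (Nat.pos_of_ne_zero hval0) hdvd'
      exact absurd (ZMod.val_lt c) (not_lt.mpr this)
    rw [geom_sum_eq hz, hpow]
    simp [hc]

lemma dft_eq {d : ℕ} [NeZero d] (f : ZMod d → ℂ) (k : ZMod d) :
    dft f k = (1 / (Real.sqrt d : ℂ)) * ∑ l : ZMod d, ee (k * l) * f l := by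
  rw [dft]
  congr 1
  refine Finset.sum_congr rfl fun l _ => ?_
  congr 1
  rw [ee_mul, Ee]
  congr 1
  push_cast
  ring

lemma key_sum {d : ℕ} [NeZero d] (hd : Odd d) (lam : ℂ) (hlam : lam ≠ 0)
    (f : ZMod d → ℂ) (hf : ∀ k : ZMod d, conv f f (2 * k) = lam * f k ^ 2) (k : ZMod d) :
    ∑ a : ZMod d, ee (2 * k * a) * f a ^ 2
      = 1 / lam * (∑ l : ZMod d, ee (k * l) * f l) ^ 2 := by
  have h2 : IsUnit (2 : ZMod d) := by
    have hco : Nat.Coprime 2 d := Nat.coprime_two_left.mpr hd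
    have := (ZMod.isUnit_iff_coprime 2 d).mpr hco
    simpa using this
  obtain ⟨u, hu⟩ := h2
  have hinv : (2 : ZMod d) * (↑u⁻¹ : ZMod d) = 1 := by
    rw [← hu]; exact_mod_cast u.mul_inv
  have step1 : ∀ a : ZMod d, ee (2 * k * a) * f a ^ 2
      = 1 / lam * ∑ l : ZMod d, ee (2 * k * a) * (f l * f (2 * a - l)) := by
    intro a
    have := hf a
    rw [conv] at this
    field_simp
    simp_rw [mul_assoc]
    rw [← Finset.mul_sum, this]
    ring
  rw [Finset.sum_congr rfl fun a _ => step1 a, ← Finset.mul_sum]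
  congr 1
  rw [Finset.sum_comm]
  have step2 : ∀ l : ZMod d, ∑ a : ZMod d, ee (2 * k * a) * (f l * f (2 * a - l))
      = ∑ m : ZMod d, (ee (k * l) * f l) * (ee (k * m) * f m) := by
    intro l
    have hbij : Function.Bijective (fun a : ZMod d => 2 * a - l) := by
      constructor
      · intro a b hab
        simp only [sub_left_inj] at hab
        calc a = (↑u⁻¹ * 2) * a := by rw [mul_comm (↑u⁻¹ : ZMod d) 2, hinv, one_mul]
        _ = ↑u⁻¹ * (2 * b) := by rw [mul_assoc, hab]
        _ = b := by rw [← mul_assoc, mul_comm (↑u⁻¹ : ZMod d) 2, hinv, one_mul]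
      · intro m
        refine ⟨↑u⁻¹ * (m + l), ?_⟩
        show 2 * ((↑u⁻¹ : ZMod d) * (m + l)) - l = m
        rw [← mul_assoc, hinv, one_mul, add_sub_cancel_right]
    refine Fintype.sum_bijective _ hbij _ _ fun a => ?_
    show ee (2 * k * a) * (f l * f (2 * a - l))
        = (ee (k * l) * f l) * (ee (k * (2 * a - l)) * f (2 * a - l))
    have harg : k * l + k * (2 * a - l) = 2 * k * a := by ring
    have hsplit : ee (2 * k * a) = ee (k * l) * ee (k * (2 * a - l)) := by
      rw [← ee_add, harg]
    rw [hsplit]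
    ring
  rw [Finset.sum_congr rfl fun l _ => step2 l, ← Fintype.sum_mul_sum, sq]

/-- The Fourier transform sends `F_λ` into `F_{d/λ}`. -/
theorem fourier_maps_critical (d : ℕ) [NeZero d] (hd : Odd d)
    (lam : ℂ) (hlam : lam ≠ 0) (f : ZMod d → ℂ)
    (hf : ∀ k : ZMod d, conv f f (2 * k) = lam * f k ^ 2) :
    ∀ k : ZMod d, conv (dft f) (dft f) (2 * k) = (d : ℂ) / lam * dft f k ^ 2 := by
  intro k
  have hdc : (d : ℂ) ≠ 0 := Nat.cast_ne_zero.mpr (NeZero.ne d)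
  set S : ℂ := ((Real.sqrt d : ℝ) : ℂ) with hS
  have hs2 : S ^ 2 = (d : ℂ) := by
    rw [hS, ← Complex.ofReal_pow, Real.sq_sqrt (Nat.cast_nonneg d)]
    simp
  have hsne : S ≠ 0 := by
    intro h
    rw [h] at hs2
    simp at hs2
    exact hdc hs2.symm
  rw [conv]
  have expand : ∀ m : ZMod d, dft f m * dft f (2 * k - m)
      = (1 / S) ^ 2 * ∑ a : ZMod d, ∑ b : ZMod d,
          (ee (m * a) * f a) * (ee ((2 * k - m) * b) * f b) := by
    intro m
    calc dft f m * dft f (2 * k - m)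
        = (1 / S * (1 / S)) * ((∑ a : ZMod d, ee (m * a) * f a)
            * (∑ b : ZMod d, ee ((2 * k - m) * b) * f b)) := by
          rw [dft_eq, dft_eq]; ring
      _ = (1 / S) ^ 2 * ∑ a : ZMod d, ∑ b : ZMod d,
            (ee (m * a) * f a) * (ee ((2 * k - m) * b) * f b) := by
          rw [Fintype.sum_mul_sum]; ring
  rw [Finset.sum_congr rfl fun m _ => expand m, ← Finset.mul_sum]
  have hswap : ∑ m : ZMod d, ∑ a : ZMod d, ∑ b : ZMod d,
      (ee (m * a) * f a) * (ee ((2 * k - m) * b) * f b)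
      = ∑ a : ZMod d, ∑ b : ZMod d, ∑ m : ZMod d,
      (ee (m * a) * f a) * (ee ((2 * k - m) * b) * f b) := by
    rw [Finset.sum_comm]
    exact Finset.sum_congr rfl fun a _ => Finset.sum_comm
  rw [hswap]
  have inner : ∀ a b : ZMod d, ∑ m : ZMod d,
      (ee (m * a) * f a) * (ee ((2 * k - m) * b) * f b)
      = (f a * f b * ee (2 * k * b)) * (if a - b = 0 then (d : ℂ) else 0) := by
    intro a b
    have hterm : ∀ m : ZMod d, (ee (m * a) * f a) * (ee ((2 * k - m) * b) * f b)
        = (f a * f b * ee (2 * k * b)) * ee (m * (a - b)) := by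
      intro m
      have h1 : ee (m * a) * ee ((2 * k - m) * b) = ee (2 * k * b) * ee (m * (a - b)) := by
        rw [← ee_add, ← ee_add]
        congr 1
        ring
      calc (ee (m * a) * f a) * (ee ((2 * k - m) * b) * f b)
          = (ee (m * a) * ee ((2 * k - m) * b)) * (f a * f b) := by ring
        _ = (ee (2 * k * b) * ee (m * (a - b))) * (f a * f b) := by rw [h1]
        _ = (f a * f b * ee (2 * k * b)) * ee (m * (a - b)) := by ring
    rw [Finset.sum_congr rfl fun m _ => hterm m, ← Finset.mul_sum, ee_sum]
  rw [Finset.sum_congr rfl fun a _ => Finset.sum_congr rfl fun b _ => inner a b]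
  have collapse : ∀ a : ZMod d,
      ∑ b : ZMod d, (f a * f b * ee (2 * k * b)) * (if a - b = 0 then (d : ℂ) else 0)
      = ee (2 * k * a) * f a ^ 2 * d := by
    intro a
    simp only [sub_eq_zero, mul_ite, mul_zero]
    rw [Finset.sum_ite_eq]
    simp only [Finset.mem_univ, ite_true]
    ring
  rw [Finset.sum_congr rfl fun a _ => collapse a]
  have hsum : ∑ a : ZMod d, ee (2 * k * a) * f a ^ 2 * (d : ℂ)
      = (d : ℂ) * ∑ a : ZMod d, ee (2 * k * a) * f a ^ 2 := by
    rw [Finset.mul_sum]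
    exact Finset.sum_congr rfl fun a _ => by ring
  rw [hsum, key_sum hd lam hlam f hf k]
  have hdft : (∑ l : ZMod d, ee (k * l) * f l) = S * dft f k := by
    rw [dft_eq]
    field_simp
    rw [← hS, mul_div_assoc, div_self hsne, mul_one]
  rw [hdft, mul_pow, hs2, div_pow, one_pow, hs2]
  field_simp
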